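/- (q-Vandermonde convolution, ℓ-fold version) For nonnegative integers ρ₁ ≥ ρ₂ ≥ ⋯ ≥ ρ_ℓ ≥ ρ_{ℓ+1} = 0 and s ≥ 0, one has Σ q^{Σ_{j=1}^ℓ x_j(ρ_{j+1} − (x_{j+1}+⋯+x_ℓ))} ∏_{j=1}^ℓ [ρ_j − ρ_{j+1} choose x_j]_q = [ρ₁ choose s]_q, where the sum is over all tuples (x₁,…,x_ℓ) of nonnegative integers with x₁+⋯+x_ℓ = s and x_j ≤ ρ_j − ρ_{j+1} for all j. -/

import Mathlib

open Finset

/-- The `q`-analog `[n]_q = 1 + q + ⋯ + q^{n-1}` as a rational function in `q`. -/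
noncomputable def qInt (n : ℕ) : RatFunc ℚ := ∑ i ∈ Finset.range n, RatFunc.X ^ i

/-- The `q`-factorial `[n]_q!`. -/
noncomputable def qFact : ℕ → RatFunc ℚ
  | 0 => 1
  | n + 1 => qFact n * qInt (n + 1)

/-- The Gaussian binomial coefficient `[a choose b]_q`. -/
noncomputable def qBinom (a b : ℕ) : RatFunc ℚ :=
  if b ≤ a then qFact a / (qFact b * qFact (a - b)) else 0

lemma qInt_eq (n : ℕ) :
    qInt n = algebraMap (Polynomial ℚ) (RatFunc ℚ) (∑ i ∈ Finset.range n, Polynomial.X ^ i) := by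
  simp [qInt, map_sum, map_pow, RatFunc.algebraMap_X]

lemma qInt_ne_zero {n : ℕ} (hn : 0 < n) : qInt n ≠ 0 := by
  rw [qInt_eq]
  apply RatFunc.algebraMap_ne_zero
  intro h
  have := congrArg (Polynomial.eval 0) h
  rw [Polynomial.eval_finset_sum] at this
  rw [Finset.sum_eq_single 0 (by intro b _ hb; simp [Polynomial.eval_pow, zero_pow hb])
    (by intro h; exact absurd (Finset.mem_range.mpr hn) h)] at this
  simp at this

lemma qFact_ne_zero (n : ℕ) : qFact n ≠ 0 := by
  induction n with
  | zero => simp [qFact]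
  | succ n ih => exact mul_ne_zero ih (qInt_ne_zero n.succ_pos)

lemma qInt_add (c d : ℕ) : qInt (c + d) = qInt c + RatFunc.X ^ c * qInt d := by
  simp only [qInt, Finset.sum_range_add, Finset.mul_sum, pow_add]

lemma qBinom_zero (a : ℕ) : qBinom a 0 = 1 := by
  simp [qBinom, qFact, qFact_ne_zero]

lemma qBinom_self (a : ℕ) : qBinom a a = 1 := by
  simp [qBinom, qFact, qFact_ne_zero]

lemma qBinom_eq_zero {a b : ℕ} (h : a < b) : qBinom a b = 0 := by
  simp [qBinom, Nat.not_le.mpr h]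

lemma qFact_succ (n : ℕ) : qFact (n + 1) = qFact n * qInt (n + 1) := rfl

lemma qPascal (a b : ℕ) :
    qBinom (a + 1) (b + 1) = qBinom a (b + 1) + RatFunc.X ^ (a - b) * qBinom a b := by
  rcases lt_or_ge a b with h | h
  · rw [qBinom_eq_zero (by omega), qBinom_eq_zero (by omega), qBinom_eq_zero (by omega)]
    ring
  · rcases Nat.eq_or_lt_of_le h with rfl | h'
    · simp [qBinom_self, qBinom_eq_zero (Nat.lt_succ_self b), qBinom_zero]
    -- b + 1 ≤ a
    have hb1 : b + 1 ≤ a := h'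
    rw [qBinom, qBinom, qBinom, if_pos (by omega), if_pos hb1, if_pos h]
    have h1 : a + 1 - (b + 1) = a - b := by omega
    have h2 : a - b = (a - (b + 1)) + 1 := by omega
    rw [h1, qFact_succ a, h2, qFact_succ (a - (b+1)), qFact_succ b, ← h2]
    have hq : qInt (a + 1) = qInt (a - b) + RatFunc.X ^ (a - b) * qInt (b + 1) := by
      rw [← qInt_add]; congr 1; omega
    rw [hq, h2]
    have n1 := qFact_ne_zero b
    have n2 := qFact_ne_zero (a - (b + 1))
    have n3 := qInt_ne_zero (Nat.succ_pos b)
    have n4 := qInt_ne_zero (Nat.succ_pos (a - (b + 1)))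
    field_simp

lemma qPascal' (m k : ℕ) : qBinom (m + 1) k =
    qBinom m k + (if k = 0 then 0 else RatFunc.X ^ (m + 1 - k) * qBinom m (k - 1)) := by
  cases k with
  | zero => simp [qBinom_zero]
  | succ j => simpa using qPascal m j

lemma qVandermonde (m n s : ℕ) :
    ∑ k ∈ Finset.range (s + 1),
      RatFunc.X ^ (k * (n - (s - k))) * qBinom m k * qBinom n (s - k) = qBinom (m + n) s := by
  induction m generalizing s with
  | zero =>
    rw [Finset.sum_eq_single 0]
    · simp [qBinom_zero]
    · intro k _ hk
      rw [qBinom_eq_zero (by omega), mul_zero, zero_mul]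
    · intro h; exact absurd (Finset.mem_range.mpr s.succ_pos) h
  | succ m ih =>
    simp only [qPascal']
    simp only [mul_add, add_mul, Finset.sum_add_distrib]
    rw [ih s]
    have key : ∑ k ∈ Finset.range (s + 1),
        RatFunc.X ^ (k * (n - (s - k))) *
          (if k = 0 then 0 else RatFunc.X ^ (m + 1 - k) * qBinom m (k - 1)) * qBinom n (s - k)
        = RatFunc.X ^ (m + n + 1 - s) * qBinom (m + n) (s - 1) * (if s = 0 then 0 else 1) := by
      cases s with
      | zero => simp
      | succ t =>
        rw [if_neg (Nat.succ_ne_zero t), mul_one, Nat.add_sub_cancel, ← ih t, Finset.mul_sum,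
          Finset.sum_range_succ']
        simp only [if_neg (Nat.succ_ne_zero _), if_true, if_pos rfl, mul_zero, zero_mul, add_zero,
          Nat.add_sub_cancel]
        refine Finset.sum_congr rfl fun j hj => ?_
        rw [Finset.mem_range] at hj
        rcases le_or_gt j m with hjm | hjm
        · rcases le_or_gt (t - j) n with htn | htn
          · have he : (j + 1) * (n - (t + 1 - (j + 1))) + (m + 1 - (j + 1))
                = (m + n + 1 - (t + 1)) + j * (n - (t - j)) := by
              have h1 : t + 1 - (j + 1) = t - j := by omega
              rw [h1]
              set u := n - (t - j) with hu
              have : (j + 1) * u = j * u + u := by ring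
              omega
            rw [show t + 1 - (j + 1) = t - j from by omega] at he ⊢
            rw [← mul_assoc, ← pow_add, he, pow_add]
            ring
          · rw [show t + 1 - (j + 1) = t - j by omega, qBinom_eq_zero htn]
            simp
        · rw [qBinom_eq_zero hjm]
          simp
    rw [key]
    cases s with
    | zero => simp [qBinom_zero]
    | succ t =>
      rw [if_neg (Nat.succ_ne_zero t), mul_one, Nat.add_sub_cancel,
        show m + 1 + n = m + n + 1 by ring, qPascal (m + n) t,
        show m + n + 1 - (t + 1) = m + n - t by omega]

lemma sum_filter_lt_zero {k : ℕ} (x : Fin (k + 1) → ℕ) :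
    ∑ i ∈ Finset.univ.filter (fun i : Fin (k + 1) => 0 < i), x i = ∑ i : Fin k, x i.succ := by
  rw [Finset.sum_filter, Fin.sum_univ_succ]
  simp [Fin.succ_pos]

lemma sum_filter_lt_succ {k : ℕ} (x : Fin (k + 1) → ℕ) (j : Fin k) :
    ∑ i ∈ Finset.univ.filter (fun i : Fin (k + 1) => j.succ < i), x i =
      ∑ i ∈ Finset.univ.filter (fun i : Fin k => j < i), x i.succ := by
  rw [Finset.sum_filter, Finset.sum_filter, Fin.sum_univ_succ]
  simp [Fin.succ_lt_succ_iff, Fin.not_lt_zero]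

/-- The `ℓ`-fold `q`-Vandermonde convolution: for `ρ₁ ≥ ⋯ ≥ ρ_ℓ ≥ ρ_{ℓ+1} = 0`
(written 0-indexed, so `ρ 0 = ρ₁` and `ρ ℓ = ρ_{ℓ+1} = 0`) and `s ≥ 0`,
`Σ q^{Σ_j x_j (ρ_{j+1} − (x_{j+1}+⋯+x_ℓ))} ∏_j [ρ_j − ρ_{j+1} choose x_j]_q
  = [ρ₁ choose s]_q`, the sum over tuples `x` of nonnegative integers with
`Σ x_j = s` and `x_j ≤ ρ_j − ρ_{j+1}`. -/
theorem qVandermonde_multifold (ℓ s : ℕ) (ρ : ℕ → ℕ)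
    (hmono : ∀ i < ℓ, ρ (i + 1) ≤ ρ i) (hlast : ρ ℓ = 0) :
    ∑ x ∈ (Finset.Nat.antidiagonalTuple ℓ s).filter
        (fun x => ∀ j : Fin ℓ, x j ≤ ρ j.val - ρ (j.val + 1)),
      (RatFunc.X : RatFunc ℚ) ^
          (∑ j : Fin ℓ, x j * (ρ (j.val + 1) -
            ∑ i ∈ Finset.univ.filter (fun i : Fin ℓ => j < i), x i)) *
        ∏ j : Fin ℓ, qBinom (ρ j.val - ρ (j.val + 1)) (x j) =
      qBinom (ρ 0) s := by
  induction ℓ generalizing s ρ with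
  | zero =>
    cases s with
    | zero => simp [qBinom_zero]
    | succ t =>
      rw [Finset.Nat.antidiagonalTuple_zero_succ, Finset.filter_empty, Finset.sum_empty,
        hlast, qBinom_eq_zero t.succ_pos]
  | succ ℓ ih =>
    have h01 : ρ 1 ≤ ρ 0 := hmono 0 (Nat.succ_pos ℓ)
    set A := ((Finset.range (s + 1)).filter (fun a => a ≤ ρ 0 - ρ 1)).sigma
      (fun a => (Finset.Nat.antidiagonalTuple ℓ (s - a)).filter
        (fun y => ∀ j : Fin ℓ, y j ≤ ρ (j.val + 1) - ρ (j.val + 1 + 1))) with hA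
    have step1 :
        ∑ x ∈ (Finset.Nat.antidiagonalTuple (ℓ + 1) s).filter
            (fun x => ∀ j : Fin (ℓ + 1), x j ≤ ρ j.val - ρ (j.val + 1)),
          (RatFunc.X : RatFunc ℚ) ^
              (∑ j : Fin (ℓ + 1), x j * (ρ (j.val + 1) -
                ∑ i ∈ Finset.univ.filter (fun i : Fin (ℓ + 1) => j < i), x i)) *
            ∏ j : Fin (ℓ + 1), qBinom (ρ j.val - ρ (j.val + 1)) (x j)
        = ∑ p ∈ A,
            (RatFunc.X : RatFunc ℚ) ^ (p.1 * (ρ 1 - (s - p.1))) * qBinom (ρ 0 - ρ 1) p.1 *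
              ((RatFunc.X : RatFunc ℚ) ^
                  (∑ j : Fin ℓ, p.2 j * (ρ (j.val + 1 + 1) -
                    ∑ i ∈ Finset.univ.filter (fun i : Fin ℓ => j < i), p.2 i)) *
                ∏ j : Fin ℓ, qBinom (ρ (j.val + 1) - ρ (j.val + 1 + 1)) (p.2 j)) := by
      refine Finset.sum_nbij' (fun x => ⟨x 0, Fin.tail x⟩) (fun p => Fin.cons p.1 p.2)
        ?_ ?_ ?_ ?_ ?_
      · intro x hx
        rw [Finset.mem_filter, Finset.Nat.mem_antidiagonalTuple] at hx
        obtain ⟨hsum, hle⟩ := hx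
        rw [Fin.sum_univ_succ] at hsum
        simp only [hA, Finset.mem_sigma, Finset.mem_filter,
          Finset.Nat.mem_antidiagonalTuple, Finset.mem_range]
        refine ⟨⟨?_, ?_⟩, ?_, ?_⟩
        · omega
        · exact hle 0
        · show ∑ i : Fin ℓ, x i.succ = s - x 0
          omega
        · exact fun j => hle j.succ
      · intro p hp
        simp only [hA, Finset.mem_sigma, Finset.mem_filter,
          Finset.Nat.mem_antidiagonalTuple, Finset.mem_range] at hp
        obtain ⟨⟨hps, hp1⟩, hysum, hyle⟩ := hp
        rw [Finset.mem_filter, Finset.Nat.mem_antidiagonalTuple, Fin.sum_univ_succ]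
        constructor
        · simp only [Fin.cons_zero, Fin.cons_succ]
          omega
        · intro j
          refine Fin.cases ?_ ?_ j
          · simpa using hp1
          · intro i
            simpa using hyle i
      · intro x _
        exact Fin.cons_self_tail x
      · intro p _
        simp [Fin.tail_cons]
      · intro x hx
        rw [Finset.mem_filter, Finset.Nat.mem_antidiagonalTuple] at hx
        obtain ⟨hsum, hle⟩ := hx
        rw [Fin.sum_univ_succ] at hsum
        rw [Fin.sum_univ_succ, Fin.prod_univ_succ]
        have e0 : ∑ i ∈ Finset.univ.filter (fun i : Fin (ℓ + 1) => 0 < i), x i = s - x 0 := by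
          rw [sum_filter_lt_zero]; omega
        have esucc : ∀ j : Fin ℓ,
            ∑ i ∈ Finset.univ.filter (fun i : Fin (ℓ + 1) => j.succ < i), x i =
              ∑ i ∈ Finset.univ.filter (fun i : Fin ℓ => j < i), Fin.tail x i := by
          intro j; exact sum_filter_lt_succ x j
        simp only [e0, esucc, Fin.tail, Fin.val_succ, Fin.val_zero, Nat.zero_add]
        rw [pow_add]
        ring
    rw [step1, Finset.sum_sigma]
    have step2 : ∀ a ∈ (Finset.range (s + 1)).filter (fun a => a ≤ ρ 0 - ρ 1),
        (∑ y ∈ (Finset.Nat.antidiagonalTuple ℓ (s - a)).filter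
            (fun y => ∀ j : Fin ℓ, y j ≤ ρ (j.val + 1) - ρ (j.val + 1 + 1)),
          (RatFunc.X : RatFunc ℚ) ^ (a * (ρ 1 - (s - a))) * qBinom (ρ 0 - ρ 1) a *
            ((RatFunc.X : RatFunc ℚ) ^
                (∑ j : Fin ℓ, y j * (ρ (j.val + 1 + 1) -
                  ∑ i ∈ Finset.univ.filter (fun i : Fin ℓ => j < i), y i)) *
              ∏ j : Fin ℓ, qBinom (ρ (j.val + 1) - ρ (j.val + 1 + 1)) (y j)))
        = (RatFunc.X : RatFunc ℚ) ^ (a * (ρ 1 - (s - a))) * qBinom (ρ 0 - ρ 1) a *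
            qBinom (ρ 1) (s - a) := by
      intro a _
      rw [← Finset.mul_sum]
      congr 1
      exact ih (s - a) (fun i => ρ (i + 1)) (fun i hi => hmono (i + 1) (by omega)) hlast
    rw [Finset.sum_congr rfl step2]
    rw [Finset.sum_filter_of_ne (by
      intro a _ h
      by_contra hcon
      push_neg at hcon
      exact h (by rw [qBinom_eq_zero hcon, mul_zero, zero_mul]))]
    rw [qVandermonde (ρ 0 - ρ 1) (ρ 1) s, Nat.sub_add_cancel h01]
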